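/- arXiv:2501.04461 — 2 statements merged into one kernel-verified Lean document; each statement's English description precedes it below -/
import Mathlib

section
/- Contribution of terms with shared prime factor: for 1 ≤ h < n ≤ N, Σ_{χ even mod t^{N-h}} Σ_{h < x ≤ n} |Σ_{P ∈ P_x} χ(P)² Σ_{M ∈ M_{n-2x}} b_{MP} χ(M)|² ≪ (n/h²) q^{N+n-h}, for any coefficients b_{MP} with |b_{MP}| ≤ 1. -/
open Polynomial Finset Filter
open scoped Classical

/-- The set of monic polynomials of degree `n` over `Fq`. -/
noncomputable def Mn (Fq : Type) [Field Fq] [Fintype Fq] (n : ℕ) : Finset (Polynomial Fq) :=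
  (Finset.univ : Finset (Fin n → Fq)).image
    (fun c => Polynomial.X ^ n + ∑ i : Fin n, Polynomial.C (c i) * Polynomial.X ^ (i : ℕ))

/-- The set of monic irreducible polynomials of degree `x` over `Fq`. -/
noncomputable def Px (Fq : Type) [Field Fq] [Fintype Fq] (x : ℕ) : Finset (Polynomial Fq) :=
  (Mn Fq x).filter Irreducible

/-- `Mn` extended to integer degrees: empty for negative degree. -/
noncomputable def MnInt (Fq : Type) [Field Fq] [Fintype Fq] (m : ℤ) : Finset (Polynomial Fq) :=
  if 0 ≤ m then Mn Fq m.toNat else ∅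

/-- The Liouville function on `Fq[t]`: `(-1)` to the number of irreducible
factors counted with multiplicity. -/
noncomputable def liouville {Fq : Type} [Field Fq] [Fintype Fq] (G : Polynomial Fq) : ℤ :=
  (-1) ^ Multiset.card (UniqueFactorizationMonoid.factors G)

/-- The residue ring `Fq[t]/(Q)`. -/
abbrev RQ (Fq : Type) [Field Fq] [Fintype Fq] (Q : Polynomial Fq) :=
  Polynomial Fq ⧸ Ideal.span {Q}

/-- Value of a Dirichlet character mod `Q` at a polynomial. -/
noncomputable def chpoly {Fq : Type} [Field Fq] [Fintype Fq] {Q : Polynomial Fq}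
    (χ : MulChar (RQ Fq Q) ℂ) (G : Polynomial Fq) : ℂ :=
  χ (Ideal.Quotient.mk (Ideal.span {Q}) G)

/-- A Dirichlet character is even if it is invariant under multiplication by
nonzero constants. -/
noncomputable def IsEvenChar {Fq : Type} [Field Fq] [Fintype Fq] {Q : Polynomial Fq}
    (χ : MulChar (RQ Fq Q) ℂ) : Prop :=
  ∀ (c : Fqˣ) (G : Polynomial Fq), chpoly χ (Polynomial.C (c : Fq) * G) = chpoly χ G

/-- Euler's function for polynomial moduli: `φ(Q) = |(Fq[t]/Q)ˣ|`. -/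
noncomputable def phi (Fq : Type) [Field Fq] [Fintype Fq] (Q : Polynomial Fq) : ℕ :=
  Nat.card (Polynomial Fq ⧸ Ideal.span {Q})ˣ

/-- A polynomial is `h`-smooth if all of its irreducible factors have degree at most `h`. -/
def IsSmooth {Fq : Type} [Field Fq] [Fintype Fq] (h : ℕ) (G : Polynomial Fq) : Prop :=
  ∀ P : Polynomial Fq, Irreducible P → P ∣ G → P.natDegree ≤ h

/-- The von Mangoldt function on `Fq[t]`: `Λ(P^k) = deg P` for `P` monic
irreducible and `k ≥ 1`, and `Λ = 0` otherwise. -/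
noncomputable def Lam {Fq : Type} [Field Fq] [Fintype Fq] (G : Polynomial Fq) : ℕ :=
  if hG : ∃ P : Polynomial Fq, P.Monic ∧ Irreducible P ∧ ∃ k, 1 ≤ k ∧ G = P ^ k
  then hG.choose.natDegree else 0

/-- `ω_{[h,n]}(M)`: number of distinct monic irreducible divisors of `M` of degree in `[h,n]`. -/
noncomputable def omegaIcc {Fq : Type} [Field Fq] [Fintype Fq] (h n : ℕ) (M : Polynomial Fq) : ℕ :=
  (((Finset.Icc h n).biUnion (Px Fq)).filter (· ∣ M)).card

/-- `ω_{(h,n]}(M)`: number of distinct monic irreducible divisors of `M` of degree in `(h,n]`. -/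
noncomputable def omegaIoc {Fq : Type} [Field Fq] [Fintype Fq] (h n : ℕ) (M : Polynomial Fq) : ℕ :=
  (((Finset.Ioc h n).biUnion (Px Fq)).filter (· ∣ M)).card

/-- The polynomials of degree at most `h`. -/
noncomputable def Dle (Fq : Type) [Field Fq] [Fintype Fq] (h : ℕ) : Finset (Polynomial Fq) :=
  (Finset.univ : Finset (Fin (h + 1) → Fq)).image
    (fun c => ∑ i : Fin (h + 1), Polynomial.C (c i) * Polynomial.X ^ (i : ℕ))

/-- The short interval of length `h` about `G₀`: all `G` with `deg (G - G₀) ≤ h`. -/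
noncomputable def Ih {Fq : Type} [Field Fq] [Fintype Fq] (h : ℕ) (G₀ : Polynomial Fq) :
    Finset (Polynomial Fq) :=
  (Dle Fq h).image (fun E => G₀ + E)

/-! ### Auxiliary lemmas: character orthogonality -/

section CharacterOrthogonality

variable {R : Type*} [CommRing R] [Finite R] [Nontrivial R]

lemma aux_hasEnough : HasEnoughRootsOfUnity ℂ (Monoid.exponent Rˣ) := by
  haveI : NeZero (Monoid.exponent Rˣ) := ⟨Monoid.exponent_ne_zero_of_finite⟩
  haveI : NeZero ((Monoid.exponent Rˣ : ℕ) : ℂ) := ⟨Nat.cast_ne_zero.mpr (NeZero.ne _)⟩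
  infer_instance

lemma aux_sum_chars [Fintype (MulChar R ℂ)] (a : R) :
    ∑ χ : MulChar R ℂ, χ a = if a = 1 then (Fintype.card (MulChar R ℂ) : ℂ) else 0 := by
  haveI := aux_hasEnough (R := R)
  split_ifs with h
  · subst h
    simp
  · obtain ⟨χ, hχ⟩ := MulChar.exists_apply_ne_one_of_hasEnoughRootsOfUnity R ℂ h
    refine eq_zero_of_mul_eq_self_left hχ ?_
    simp only [Finset.mul_sum, ← MulChar.mul_apply]
    exact Fintype.sum_bijective _ (Group.mulLeft_bijective χ) _ _ fun χ' ↦ rfl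

lemma aux_card_chars_le [Fintype R] [Fintype (MulChar R ℂ)] :
    Fintype.card (MulChar R ℂ) ≤ Fintype.card R := by
  haveI := aux_hasEnough (R := R)
  have h1 : Nat.card (MulChar R ℂ) = Nat.card Rˣ :=
    MulChar.card_eq_card_units_of_hasEnoughRootsOfUnity R ℂ
  have h2 : Nat.card Rˣ ≤ Nat.card R :=
    Nat.card_le_card_of_injective (Units.val : Rˣ → R) (fun _ _ h => Units.ext h)
  have h3 := h1.trans_le h2
  simpa [Nat.card_eq_fintype_card] using h3

lemma aux_ortho [Fintype (MulChar R ℂ)] (r s : R) :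
    ∑ χ : MulChar R ℂ, χ r * star (χ s) =
      if r = s ∧ IsUnit s then (Fintype.card (MulChar R ℂ) : ℂ) else 0 := by
  have key : ∀ χ : MulChar R ℂ, χ r * star (χ s) = χ (r * Ring.inverse s) := by
    intro χ
    rw [MulChar.star_apply', MulChar.inv_apply, ← map_mul]
  simp only [key]
  rw [aux_sum_chars]
  congr 1
  simp only [eq_iff_iff]
  constructor
  · intro h
    by_cases hs : IsUnit s
    · refine ⟨?_, hs⟩
      have h2 := congrArg (· * s) h
      simpa [mul_assoc, Ring.inverse_mul_cancel s hs] using h2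
    · rw [Ring.inverse_non_unit s hs, mul_zero] at h
      exact absurd h.symm one_ne_zero
  · rintro ⟨rfl, hs⟩
    exact Ring.mul_inverse_cancel r hs

open scoped Classical in
lemma aux_char_L2 [Fintype R] [Fintype (MulChar R ℂ)] (A : R → ℂ) :
    ∑ χ : MulChar R ℂ, ‖∑ r : R, A r * χ r‖ ^ 2 =
      (Fintype.card (MulChar R ℂ) : ℝ) *
        ∑ r ∈ Finset.univ.filter (fun r : R => IsUnit r), ‖A r‖ ^ 2 := by
  rw [← Complex.ofReal_inj]
  push_cast
  calc (∑ χ : MulChar R ℂ, (‖∑ r : R, A r * χ r‖ : ℂ) ^ 2)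
      = ∑ χ : MulChar R ℂ, (∑ r : R, A r * χ r) * star (∑ s : R, A s * χ s) := by
        refine Finset.sum_congr rfl fun χ _ => ?_
        rw [RCLike.star_def]
        exact (Complex.mul_conj' _).symm
    _ = ∑ χ : MulChar R ℂ, ∑ r : R, ∑ s : R, (A r * star (A s)) * (χ r * star (χ s)) := by
        refine Finset.sum_congr rfl fun χ _ => ?_
        rw [star_sum, Finset.sum_mul_sum]
        refine Finset.sum_congr rfl fun r _ => Finset.sum_congr rfl fun s _ => ?_
        rw [star_mul']
        ring
    _ = ∑ r : R, ∑ s : R, (A r * star (A s)) * ∑ χ : MulChar R ℂ, (χ r * star (χ s)) := by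
        rw [Finset.sum_comm]
        refine Finset.sum_congr rfl fun r _ => ?_
        rw [Finset.sum_comm]
        refine Finset.sum_congr rfl fun s _ => ?_
        rw [Finset.mul_sum]
    _ = ∑ r : R, ∑ s : R, (if r = s ∧ IsUnit s then
          (A r * star (A s)) * (Fintype.card (MulChar R ℂ) : ℂ) else 0) := by
        refine Finset.sum_congr rfl fun r _ => Finset.sum_congr rfl fun s _ => ?_
        rw [aux_ortho]
        split_ifs <;> simp
    _ = ∑ s : R, (if IsUnit s then (A s * star (A s)) * (Fintype.card (MulChar R ℂ) : ℂ)
          else 0) := by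
        rw [Finset.sum_comm]
        refine Finset.sum_congr rfl fun s _ => ?_
        have hrw : ∀ r : R, (if r = s ∧ IsUnit s then
              (A r * star (A s)) * (Fintype.card (MulChar R ℂ) : ℂ) else 0)
            = (if r = s then (if IsUnit s then (A s * star (A s)) *
                (Fintype.card (MulChar R ℂ) : ℂ) else 0) else 0) := by
          intro r
          by_cases h1 : r = s <;> by_cases h2 : IsUnit s <;> simp [h1, h2]
        simp only [hrw]
        rw [Finset.sum_ite_eq' Finset.univ s]
        simp
    _ = (Fintype.card (MulChar R ℂ) : ℂ) *
          ∑ r ∈ Finset.univ.filter (fun r : R => IsUnit r), ((‖A r‖ : ℂ)) ^ 2 := by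
        rw [Finset.mul_sum, Finset.sum_filter]
        refine Finset.sum_congr rfl fun s _ => ?_
        by_cases h : IsUnit s
        · rw [if_pos h, if_pos h]
          have hms : A s * star (A s) = ((‖A s‖ : ℂ)) ^ 2 := by
            rw [RCLike.star_def]
            exact Complex.mul_conj' _
          rw [hms]
          ring
        · rw [if_neg h, if_neg h]

end CharacterOrthogonality

/-! ### Auxiliary lemmas: polynomial counting -/

section PolyCounting

variable {Fq : Type} [Field Fq] [Fintype Fq]

lemma aux_mem_Mn {n : ℕ} {G : Polynomial Fq} (hG : G ∈ Mn Fq n) :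
    G.Monic ∧ G.natDegree = n := by
  obtain ⟨c, -, rfl⟩ := Finset.mem_image.mp hG
  have h := Polynomial.degree_sum_fin_lt c
  refine ⟨Polynomial.monic_X_pow_add h, ?_⟩
  apply Polynomial.natDegree_eq_of_degree_eq_some
  rw [Polynomial.degree_add_eq_left_of_degree_lt, Polynomial.degree_X_pow]
  rwa [Polynomial.degree_X_pow]

lemma aux_card_Mn (n : ℕ) : (Mn Fq n).card ≤ Fintype.card Fq ^ n := by
  refine le_trans Finset.card_image_le ?_
  classical
  simp [Fintype.card_fun]

/-- Counting monic polynomials of degree `n` in a fixed residue class mod `X^d`. -/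
lemma aux_class_count (d n : ℕ) (r : Polynomial Fq ⧸ Ideal.span {(Polynomial.X : Polynomial Fq) ^ d})
    (S : Finset (Polynomial Fq))
    (hS : ∀ G ∈ S, G.Monic ∧ G.natDegree = n ∧
      Ideal.Quotient.mk (Ideal.span {(Polynomial.X : Polynomial Fq) ^ d}) G = r) :
    S.card ≤ Fintype.card Fq ^ (n - d) := by
  classical
  have key : ∀ G ∈ S, ∀ G' ∈ S,
      (∀ i : Fin (n - d), G.coeff (d + i) = G'.coeff (d + i)) → G = G' := by
    intro G hG G' hG' hcoeff
    obtain ⟨hGm, hGn, hGr⟩ := hS G hG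
    obtain ⟨hG'm, hG'n, hG'r⟩ := hS G' hG'
    have hdvd : (Polynomial.X : Polynomial Fq) ^ d ∣ G - G' := by
      rw [← Ideal.mem_span_singleton]
      exact (Ideal.Quotient.eq).mp (hGr.trans hG'r.symm)
    by_cases hdn : d ≤ n
    · have hz : G - G' = 0 := by
        apply Polynomial.ext
        intro k
        rw [Polynomial.coeff_zero]
        rcases lt_or_ge k d with hk | hk
        · exact Polynomial.X_pow_dvd_iff.mp hdvd k hk
        · rw [Polynomial.coeff_sub, sub_eq_zero]
          rcases lt_or_ge k n with hk2 | hk2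
          · have hi : k - d < n - d := by omega
            have := hcoeff ⟨k - d, hi⟩
            simpa [Nat.add_sub_cancel' hk] using this
          · rcases eq_or_lt_of_le hk2 with hk3 | hk3
            · have e1 : G.coeff n = 1 := by rw [← hGn]; exact hGm.coeff_natDegree
              have e2 : G'.coeff n = 1 := by rw [← hG'n]; exact hG'm.coeff_natDegree
              rw [← hk3, e1, e2]
            · rw [Polynomial.coeff_eq_zero_of_natDegree_lt (by omega),
                Polynomial.coeff_eq_zero_of_natDegree_lt (by omega)]
      exact sub_eq_zero.mp hz
    · by_contra hne
      have h0 : G - G' ≠ 0 := sub_ne_zero.mpr hne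
      have h1 := Polynomial.natDegree_le_of_dvd hdvd h0
      rw [Polynomial.natDegree_X_pow] at h1
      have h2 : (G - G').natDegree ≤ n :=
        le_trans (Polynomial.natDegree_sub_le G G') (by simp [hGn, hG'n])
      omega
  calc S.card ≤ (Finset.univ : Finset (Fin (n - d) → Fq)).card := by
        apply Finset.card_le_card_of_injOn (fun G (i : Fin (n - d)) => G.coeff (d + (i : ℕ)))
          (fun _ _ => Finset.mem_univ _)
        intro G hG G' hG' h
        exact key G hG G' hG' fun i => congrFun h i
    _ = Fintype.card Fq ^ (n - d) := by simp [Fintype.card_fun]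

/-- Degree count for distinct monic irreducible divisors. -/
lemma aux_divisor_count (x n : ℕ) (G : Polynomial Fq) (hG0 : G ≠ 0) (hGn : G.natDegree = n)
    (S : Finset (Polynomial Fq))
    (hS : ∀ P ∈ S, P.Monic ∧ Irreducible P ∧ P.natDegree = x)
    (hdvd : ∀ P ∈ S, P ∣ G) : S.card * x ≤ n := by
  have hcop : (↑S : Set (Polynomial Fq)).Pairwise (Function.onFun IsCoprime id) := by
    intro P hP Q hQ hne
    obtain ⟨hPm, hPi, hPx⟩ := hS P hP
    obtain ⟨hQm, hQi, hQx⟩ := hS Q hQ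
    show IsCoprime P Q
    rw [hPi.coprime_iff_not_dvd]
    intro hdvd'
    exact hne (eq_of_monic_of_associated hPm hQm (hPi.associated_of_dvd hQi hdvd'))
  have hprod : ∏ P ∈ S, P ∣ G := Finset.prod_dvd_of_coprime hcop (fun P hP => hdvd P hP)
  have hdeg : (∏ P ∈ S, P).natDegree = S.card * x := by
    rw [Polynomial.natDegree_prod _ _ (fun P hP => (hS P hP).1.ne_zero)]
    rw [Finset.sum_congr rfl (fun P hP => (hS P hP).2.2)]
    simp [mul_comm]
  have hle := Polynomial.natDegree_le_of_dvd hprod hG0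
  omega

lemma aux_irred_dvd (P : Polynomial Fq) (hm : P.Monic) (hi : Irreducible P) :
    P ∣ Polynomial.X ^ (Fintype.card Fq ^ P.natDegree) - Polynomial.X := by
  haveI : Fact (Irreducible P) := ⟨hi⟩
  have hP0 : P ≠ 0 := hm.ne_zero
  let pb := AdjoinRoot.powerBasis hP0
  haveI : Module.Finite Fq (AdjoinRoot P) := pb.finite
  haveI : Finite (AdjoinRoot P) := Module.finite_of_finite Fq
  haveI : Fintype (AdjoinRoot P) := Fintype.ofFinite _
  have hcard : Fintype.card (AdjoinRoot P) = Fintype.card Fq ^ P.natDegree := by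
    rw [Module.card_fintype pb.basis]
    congr 1
    simp [pb, AdjoinRoot.powerBasis_dim]
  have hroot : (Polynomial.aeval (AdjoinRoot.root P))
      (Polynomial.X ^ (Fintype.card Fq ^ P.natDegree) - Polynomial.X : Polynomial Fq) = 0 := by
    rw [map_sub, map_pow, Polynomial.aeval_X, ← hcard, FiniteField.pow_card, sub_self]
  have hmin := minpoly.dvd Fq (AdjoinRoot.root P) hroot
  rwa [AdjoinRoot.minpoly_root hP0, hm.leadingCoeff, inv_one, map_one, mul_one] at hmin

lemma aux_mem_Px {x : ℕ} {P : Polynomial Fq} (hP : P ∈ Px Fq x) :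
    P.Monic ∧ Irreducible P ∧ P.natDegree = x := by
  rw [Px, Finset.mem_filter] at hP
  obtain ⟨h1, h2⟩ := hP
  obtain ⟨hm, hd⟩ := aux_mem_Mn h1
  exact ⟨hm, h2, hd⟩

/-- Gauss bound on the number of monic irreducibles of degree `x`. -/
lemma aux_card_Px (x : ℕ) (hx : 1 ≤ x) :
    (Px Fq x).card * x ≤ Fintype.card Fq ^ x := by
  have hq : 2 ≤ Fintype.card Fq := Fintype.one_lt_card
  have h2 : 2 ≤ Fintype.card Fq ^ x := le_trans hq (Nat.le_self_pow (by omega) _)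
  set W : Polynomial Fq := Polynomial.X ^ (Fintype.card Fq ^ x) - Polynomial.X with hW
  have hWdeg : W.natDegree = Fintype.card Fq ^ x := by
    apply Polynomial.natDegree_eq_of_degree_eq_some
    rw [hW, Polynomial.degree_sub_eq_left_of_degree_lt, Polynomial.degree_X_pow]
    rw [Polynomial.degree_X, Polynomial.degree_X_pow]
    exact_mod_cast (by omega : (1:ℕ) < Fintype.card Fq ^ x)
  have hW0 : W ≠ 0 := by
    intro h
    rw [h, Polynomial.natDegree_zero] at hWdeg
    omega
  refine aux_divisor_count x (Fintype.card Fq ^ x) W hW0 hWdeg (Px Fq x)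
    (fun P hP => aux_mem_Px hP) ?_
  intro P hP
  obtain ⟨hm, hi, hd⟩ := aux_mem_Px hP
  have := aux_irred_dvd P hm hi
  rwa [hd] at this

lemma aux_geom_le {q : ℝ} (hq : 2 ≤ q) (m : ℕ) : ∑ j ∈ Finset.range m, q ^ j ≤ q ^ m := by
  induction m with
  | zero => simp
  | succ m ih =>
      rw [Finset.sum_range_succ, pow_succ]
      nlinarith [pow_nonneg (by linarith : (0:ℝ) ≤ q) m]

end PolyCounting

section PerX

variable {Fq : Type} [Field Fq] [Fintype Fq]

open scoped Classical in
lemma aux_per_x (d n x : ℕ) (hx : 1 ≤ x) (h2x : 2 * x ≤ n)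
    [Fintype (RQ Fq ((Polynomial.X : Polynomial Fq) ^ d))]
    [Nontrivial (RQ Fq ((Polynomial.X : Polynomial Fq) ^ d))]
    [Fintype (MulChar (RQ Fq ((Polynomial.X : Polynomial Fq) ^ d)) ℂ)]
    (b : Polynomial Fq → Polynomial Fq → ℂ) (hb : ∀ M P, ‖b M P‖ ≤ 1) :
    ∑ χ : MulChar (RQ Fq ((Polynomial.X : Polynomial Fq) ^ d)) ℂ,
      ‖∑ P ∈ Px Fq x, (chpoly χ P) ^ 2 *
          ∑ M ∈ MnInt Fq ((n : ℤ) - 2 * (x : ℤ)), b M P * chpoly χ M‖ ^ 2 ≤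
    (Fintype.card (MulChar (RQ Fq ((Polynomial.X : Polynomial Fq) ^ d)) ℂ) : ℝ) *
      (((n / x : ℕ) : ℝ) * (Fintype.card Fq : ℝ) ^ (n - d)) *
      (((Px Fq x).card : ℝ) * (Fintype.card Fq : ℝ) ^ (n - 2 * x)) := by
  set q := Fintype.card Fq with hq
  set R := RQ Fq ((Polynomial.X : Polynomial Fq) ^ d) with hR
  set mkq : Polynomial Fq →+* R :=
    Ideal.Quotient.mk (Ideal.span {(Polynomial.X : Polynomial Fq) ^ d}) with hmkq
  have hch : ∀ (χ : MulChar R ℂ) (G : Polynomial Fq), chpoly χ G = χ (mkq G) :=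
    fun _ _ => rfl
  have hMnInt : MnInt Fq ((n : ℤ) - 2 * (x : ℤ)) = Mn Fq (n - 2 * x) := by
    rw [MnInt, if_pos (by omega : (0:ℤ) ≤ (n : ℤ) - 2 * (x : ℤ))]
    congr 1
    omega
  set T := (Px Fq x) ×ˢ (Mn Fq (n - 2 * x)) with hT
  set g : Polynomial Fq × Polynomial Fq → Polynomial Fq := fun p => p.1 ^ 2 * p.2 with hg
  set A : R → ℂ := fun r => ∑ p ∈ T.filter (fun p => mkq (g p) = r), b p.2 p.1 with hA
  -- facts about members of T
  have hmemT : ∀ p ∈ T, p.1.Monic ∧ Irreducible p.1 ∧ p.1.natDegree = x ∧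
      p.2.Monic ∧ p.2.natDegree = n - 2 * x := by
    intro p hp
    obtain ⟨h1, h2⟩ := Finset.mem_product.mp hp
    obtain ⟨hm, hi, hdx⟩ := aux_mem_Px h1
    obtain ⟨hm2, hd2⟩ := aux_mem_Mn h2
    exact ⟨hm, hi, hdx, hm2, hd2⟩
  have hgm : ∀ p ∈ T, (g p).Monic ∧ (g p).natDegree = n := by
    intro p hp
    obtain ⟨hm, _, hdx, hm2, hd2⟩ := hmemT p hp
    refine ⟨(hm.pow 2).mul hm2, ?_⟩
    rw [hg]
    simp only []
    rw [Polynomial.natDegree_mul (pow_ne_zero 2 hm.ne_zero) hm2.ne_zero,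
      Polynomial.natDegree_pow, hdx, hd2]
    omega
  -- rewrite the character sum
  have hSrw : ∀ χ : MulChar R ℂ,
      (∑ P ∈ Px Fq x, (chpoly χ P) ^ 2 *
          ∑ M ∈ MnInt Fq ((n : ℤ) - 2 * (x : ℤ)), b M P * chpoly χ M)
        = ∑ r : R, A r * χ r := by
    intro χ
    rw [hMnInt]
    calc (∑ P ∈ Px Fq x, (chpoly χ P) ^ 2 * ∑ M ∈ Mn Fq (n - 2*x), b M P * chpoly χ M)
        = ∑ P ∈ Px Fq x, ∑ M ∈ Mn Fq (n - 2*x), b M P * χ (mkq (P ^ 2 * M)) := by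
          refine Finset.sum_congr rfl fun P _ => ?_
          rw [Finset.mul_sum]
          refine Finset.sum_congr rfl fun M _ => ?_
          rw [map_mul mkq, map_pow mkq, map_mul χ, map_pow χ, hch, hch]
          ring
      _ = ∑ p ∈ T, b p.2 p.1 * χ (mkq (g p)) := (Finset.sum_product' _ _ _).symm
      _ = ∑ r : R, ∑ p ∈ T.filter (fun p => mkq (g p) = r), b p.2 p.1 * χ (mkq (g p)) :=
          (Finset.sum_fiberwise T (fun p => mkq (g p)) _).symm
      _ = ∑ r : R, A r * χ r := by
          refine Finset.sum_congr rfl fun r _ => ?_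
          rw [hA]
          simp only []
          rw [Finset.sum_mul]
          refine Finset.sum_congr rfl fun p hp => ?_
          rw [(Finset.mem_filter.mp hp).2]
  -- fiber count bound
  have hfiber : ∀ r : R, (T.filter (fun p => mkq (g p) = r)).card ≤ (n / x) * q ^ (n - d) := by
    intro r
    set F := T.filter (fun p => mkq (g p) = r) with hF
    have hFT : F ⊆ T := Finset.filter_subset _ _
    have h1 : ∀ G ∈ F.image g, (F.filter (fun p => g p = G)).card ≤ n / x := by
      intro G hG
      obtain ⟨p0, hp0, rfl⟩ := Finset.mem_image.mp hG
      have hp0T : p0 ∈ T := hFT hp0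
      obtain ⟨hGm, hGn⟩ := hgm p0 hp0T
      have hinj : (F.filter (fun p => g p = g p0)).card ≤
          ((Px Fq x).filter (· ∣ g p0)).card := by
        apply Finset.card_le_card_of_injOn (fun p => p.1)
        · intro p hp
          obtain ⟨hpF, hpg⟩ := Finset.mem_filter.mp hp
          have hpT : p ∈ T := hFT hpF
          refine Finset.mem_filter.mpr ⟨(Finset.mem_product.mp hpT).1, ?_⟩
          exact ⟨p.1 * p.2, by rw [← hpg, hg]; ring⟩
        · intro p hp p' hp' heq
          obtain ⟨hpF, hpg⟩ := Finset.mem_filter.mp hp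
          obtain ⟨hp'F, hp'g⟩ := Finset.mem_filter.mp hp'
          have heq1 : p.1 = p'.1 := heq
          have hne : p'.1 ^ 2 ≠ 0 :=
            pow_ne_zero 2 (hmemT p' (hFT hp'F)).1.ne_zero
          have hval : p'.1 ^ 2 * p.2 = p'.1 ^ 2 * p'.2 := by
            have hgg : g p = g p' := hpg.trans hp'g.symm
            rw [hg] at hgg
            simp only [] at hgg
            rw [heq1] at hgg
            exact hgg
          exact Prod.ext heq1 (mul_left_cancel₀ hne hval)
      refine hinj.trans ?_
      rw [Nat.le_div_iff_mul_le (by omega : 0 < x)]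
      refine aux_divisor_count x n (g p0) hGm.ne_zero hGn _ ?_ ?_
      · intro P hP
        exact aux_mem_Px (Finset.mem_filter.mp hP).1
      · intro P hP
        exact (Finset.mem_filter.mp hP).2
    have h2 : (F.image g).card ≤ q ^ (n - d) := by
      apply aux_class_count d n r
      intro G hG
      obtain ⟨p, hp, rfl⟩ := Finset.mem_image.mp hG
      obtain ⟨hGm, hGn⟩ := hgm p (hFT hp)
      exact ⟨hGm, hGn, (Finset.mem_filter.mp hp).2⟩
    calc F.card ≤ (n / x) * (F.image g).card := Finset.card_le_mul_card_image F _ h1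
      _ ≤ (n / x) * q ^ (n - d) := Nat.mul_le_mul_left _ h2
  -- norm bound on A
  have hAbound : ∀ r : R, ‖A r‖ ≤ ((T.filter (fun p => mkq (g p) = r)).card : ℝ) := by
    intro r
    rw [hA]
    simp only []
    refine le_trans (norm_sum_le _ _) ?_
    have hs := Finset.sum_le_card_nsmul (T.filter (fun p => mkq (g p) = r))
      (fun p => ‖b p.2 p.1‖) 1 (fun p _ => hb p.2 p.1)
    simpa using hs
  have hsum_fibers : ∑ r : R, (T.filter (fun p => mkq (g p) = r)).card = T.card := by
    have hs := Finset.sum_fiberwise T (fun p => mkq (g p)) (fun _ => (1 : ℕ))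
    calc ∑ r : R, (T.filter (fun p => mkq (g p) = r)).card
        = ∑ r : R, ∑ _p ∈ T.filter (fun p => mkq (g p) = r), 1 :=
          Finset.sum_congr rfl fun r _ => Finset.card_eq_sum_ones _
      _ = ∑ _p ∈ T, 1 := hs
      _ = T.card := (Finset.card_eq_sum_ones _).symm
  have hTcard : T.card ≤ (Px Fq x).card * q ^ (n - 2 * x) := by
    rw [hT, Finset.card_product]
    exact Nat.mul_le_mul_left _ (aux_card_Mn _)
  -- put it together
  have hrw : (∑ χ : MulChar R ℂ, ‖∑ P ∈ Px Fq x, (chpoly χ P) ^ 2 *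
      ∑ M ∈ MnInt Fq ((n : ℤ) - 2 * (x : ℤ)), b M P * chpoly χ M‖ ^ 2)
      = ∑ χ : MulChar R ℂ, ‖∑ r : R, A r * χ r‖ ^ 2 :=
    Finset.sum_congr rfl fun χ _ => by rw [hSrw χ]
  rw [hrw, aux_char_L2 A]
  set c := (Fintype.card (MulChar R ℂ) : ℝ) with hc
  have hc0 : 0 ≤ c := Nat.cast_nonneg _
  have hB : ∑ r ∈ Finset.univ.filter (fun r : R => IsUnit r), ‖A r‖ ^ 2 ≤
      (((n / x) * q ^ (n - d) : ℕ) : ℝ) * ((Px Fq x).card * q ^ (n - 2 * x) : ℕ) := by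
    calc ∑ r ∈ Finset.univ.filter (fun r : R => IsUnit r), ‖A r‖ ^ 2
        ≤ ∑ r : R, ‖A r‖ ^ 2 := Finset.sum_le_sum_of_subset_of_nonneg
          (Finset.filter_subset _ _) (fun r _ _ => sq_nonneg _)
      _ ≤ ∑ r : R, (((n / x) * q ^ (n - d) : ℕ) : ℝ) *
            ((T.filter (fun p => mkq (g p) = r)).card : ℝ) := by
          refine Finset.sum_le_sum fun r _ => ?_
          have e1 : ‖A r‖ ^ 2 ≤ ((T.filter (fun p => mkq (g p) = r)).card : ℝ) ^ 2 :=
            pow_le_pow_left₀ (norm_nonneg _) (hAbound r) 2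
          have e2 : ((T.filter (fun p => mkq (g p) = r)).card : ℝ) ≤
              (((n / x) * q ^ (n - d) : ℕ) : ℝ) := by exact_mod_cast hfiber r
          nlinarith [Nat.cast_nonneg (α := ℝ) (T.filter (fun p => mkq (g p) = r)).card]
      _ = (((n / x) * q ^ (n - d) : ℕ) : ℝ) * (T.card : ℝ) := by
          rw [← Finset.mul_sum]
          congr 1
          exact_mod_cast congrArg (Nat.cast (R := ℝ)) hsum_fibers
      _ ≤ (((n / x) * q ^ (n - d) : ℕ) : ℝ) * ((Px Fq x).card * q ^ (n - 2 * x) : ℕ) := by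
          gcongr <;> exact_mod_cast hTcard
  calc c * ∑ r ∈ Finset.univ.filter (fun r : R => IsUnit r), ‖A r‖ ^ 2
      ≤ c * ((((n / x) * q ^ (n - d) : ℕ) : ℝ) * ((Px Fq x).card * q ^ (n - 2 * x) : ℕ)) := by
        gcongr
      _ = c * (((n / x : ℕ) : ℝ) * (q : ℝ) ^ (n - d)) *
          (((Px Fq x).card : ℝ) * (q : ℝ) ^ (n - 2 * x)) := by
        push_cast
        ring

end PerX

theorem shared_prime_factor_contribution (Fq : Type) [Field Fq] [Fintype Fq] :
    ∃ C > 0, ∀ N n h : ℕ, 1 ≤ h → h < n → n ≤ N →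
      ∀ b : Polynomial Fq → Polynomial Fq → ℂ, (∀ M P, ‖b M P‖ ≤ 1) →
      (∑ᶠ (χ : MulChar (RQ Fq ((Polynomial.X : Polynomial Fq) ^ (N - h))) ℂ)
          (_ : IsEvenChar χ),
        ∑ x ∈ Finset.Ioc h n,
          ‖∑ P ∈ Px Fq x, (chpoly χ P) ^ 2 *
              ∑ M ∈ MnInt Fq ((n : ℤ) - 2 * (x : ℤ)), b M P * chpoly χ M‖ ^ 2) ≤
      C * ((n : ℝ) / (h : ℝ) ^ 2) * (Fintype.card Fq : ℝ) ^ (N + n - h) := by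
  refine ⟨1, one_pos, ?_⟩
  intro N n h h1 hn hN b hb
  set q := Fintype.card Fq with hq
  have hq2 : 2 ≤ q := Fintype.one_lt_card
  set d := N - h with hd
  have hd1 : 1 ≤ d := by omega
  -- instances for the residue ring
  have hX0 : ((Polynomial.X : Polynomial Fq) ^ d) ≠ 0 :=
    pow_ne_zero _ Polynomial.X_ne_zero
  haveI : Module.Finite Fq (AdjoinRoot ((Polynomial.X : Polynomial Fq) ^ d)) :=
    (AdjoinRoot.powerBasis hX0).finite
  haveI hKfin : Finite (AdjoinRoot ((Polynomial.X : Polynomial Fq) ^ d)) :=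
    Module.finite_of_finite Fq
  haveI instK : Fintype (AdjoinRoot ((Polynomial.X : Polynomial Fq) ^ d)) :=
    Fintype.ofFinite _
  haveI instR : Fintype (RQ Fq ((Polynomial.X : Polynomial Fq) ^ d)) := instK
  have hcardR : Fintype.card (RQ Fq ((Polynomial.X : Polynomial Fq) ^ d)) = q ^ d := by
    have hcK : Fintype.card (AdjoinRoot ((Polynomial.X : Polynomial Fq) ^ d)) = q ^ d := by
      rw [Module.card_fintype (AdjoinRoot.powerBasis hX0).basis, hq]
      congr 1
      simp [AdjoinRoot.powerBasis_dim]
    have hNat : Nat.card (AdjoinRoot ((Polynomial.X : Polynomial Fq) ^ d)) = q ^ d := by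
      rw [Nat.card_eq_fintype_card, hcK]
    rw [← Nat.card_eq_fintype_card]
    exact hNat
  haveI : Nontrivial (RQ Fq ((Polynomial.X : Polynomial Fq) ^ d)) := by
    apply Ideal.Quotient.nontrivial_iff.mpr
    rw [Ne, Ideal.span_singleton_eq_top]
    intro hu
    refine Polynomial.not_isUnit_of_natDegree_pos _ ?_ hu
    rw [Polynomial.natDegree_pow, Polynomial.natDegree_X]
    omega
  haveI instChi : Fintype (MulChar (RQ Fq ((Polynomial.X : Polynomial Fq) ^ d)) ℂ) :=
    Fintype.ofFinite _
  have hchi : Fintype.card (MulChar (RQ Fq ((Polynomial.X : Polynomial Fq) ^ d)) ℂ) ≤ q ^ d :=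
    le_trans aux_card_chars_le (le_of_eq hcardR)
  -- reduce the finsum over even characters to a sum over all characters
  rw [finsum_cond_eq_sum_of_cond_iff _
    (t := Finset.univ.filter (fun χ : MulChar (RQ Fq ((Polynomial.X : Polynomial Fq) ^ d)) ℂ =>
      IsEvenChar χ)) (fun {χ} _ => by simp)]
  have step1 : ∑ χ ∈ Finset.univ.filter
        (fun χ : MulChar (RQ Fq ((Polynomial.X : Polynomial Fq) ^ d)) ℂ => IsEvenChar χ),
        ∑ x ∈ Finset.Ioc h n,
          ‖∑ P ∈ Px Fq x, (chpoly χ P) ^ 2 *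
              ∑ M ∈ MnInt Fq ((n : ℤ) - 2 * (x : ℤ)), b M P * chpoly χ M‖ ^ 2
      ≤ ∑ x ∈ Finset.Ioc h n,
          ∑ χ : MulChar (RQ Fq ((Polynomial.X : Polynomial Fq) ^ d)) ℂ,
          ‖∑ P ∈ Px Fq x, (chpoly χ P) ^ 2 *
              ∑ M ∈ MnInt Fq ((n : ℤ) - 2 * (x : ℤ)), b M P * chpoly χ M‖ ^ 2 := by
    rw [Finset.sum_comm]
    exact Finset.sum_le_sum fun x _ => Finset.sum_le_sum_of_subset_of_nonneg
      (Finset.filter_subset _ _) (fun χ _ _ => by positivity)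
  refine le_trans step1 ?_
  -- bound each inner sum
  have hper : ∀ x ∈ Finset.Ioc h n,
      (∑ χ : MulChar (RQ Fq ((Polynomial.X : Polynomial Fq) ^ d)) ℂ,
        ‖∑ P ∈ Px Fq x, (chpoly χ P) ^ 2 *
            ∑ M ∈ MnInt Fq ((n : ℤ) - 2 * (x : ℤ)), b M P * chpoly χ M‖ ^ 2)
      ≤ ((n : ℝ) / (h : ℝ) ^ 2) * (q : ℝ) ^ N * (q : ℝ) ^ (n - x) := by
    intro x hx
    obtain ⟨hhx, hxn⟩ := Finset.mem_Ioc.mp hx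
    have hh0 : (0 : ℝ) < (h : ℝ) := by exact_mod_cast h1
    have hx0 : (0 : ℝ) < (x : ℝ) := by exact_mod_cast (by omega : 0 < x)
    have hq1 : (1 : ℝ) ≤ (q : ℝ) := by exact_mod_cast by omega
    by_cases h2x : 2 * x ≤ n
    · refine le_trans (aux_per_x d n x (by omega) h2x b hb) ?_
      have c1 : (Fintype.card (MulChar (RQ Fq ((Polynomial.X : Polynomial Fq) ^ d)) ℂ) : ℝ)
          ≤ (q : ℝ) ^ d := by exact_mod_cast hchi
      have c2 : ((n / x : ℕ) : ℝ) ≤ (n : ℝ) / (x : ℝ) := Nat.cast_div_le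
      have c3 : ((Px Fq x).card : ℝ) ≤ (q : ℝ) ^ x / (x : ℝ) := by
        rw [le_div_iff₀ hx0]
        exact_mod_cast aux_card_Px x (by omega)
      have c4 : (q : ℝ) ^ d * (q : ℝ) ^ (n - d) ≤ (q : ℝ) ^ N := by
        rcases le_or_gt d n with hdn | hdn
        · rw [← pow_add]
          exact pow_le_pow_right₀ hq1 (by omega)
        · rw [Nat.sub_eq_zero_of_le hdn.le, pow_zero, mul_one]
          exact pow_le_pow_right₀ hq1 (by omega)
      have c5 : (q : ℝ) ^ x * (q : ℝ) ^ (n - 2 * x) = (q : ℝ) ^ (n - x) := by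
        rw [← pow_add]
        congr 1
        omega
      have step2 : (Fintype.card (MulChar (RQ Fq ((Polynomial.X : Polynomial Fq) ^ d)) ℂ) : ℝ) *
            (((n / x : ℕ) : ℝ) * (q : ℝ) ^ (n - d)) *
            (((Px Fq x).card : ℝ) * (q : ℝ) ^ (n - 2 * x))
          ≤ (q : ℝ) ^ d * (((n : ℝ) / (x : ℝ)) * (q : ℝ) ^ (n - d)) *
            (((q : ℝ) ^ x / (x : ℝ)) * (q : ℝ) ^ (n - 2 * x)) := by
        gcongr
      refine le_trans step2 ?_
      have expand : (q : ℝ) ^ d * (((n : ℝ) / (x : ℝ)) * (q : ℝ) ^ (n - d)) *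
            (((q : ℝ) ^ x / (x : ℝ)) * (q : ℝ) ^ (n - 2 * x))
          = ((q : ℝ) ^ d * (q : ℝ) ^ (n - d)) * ((q : ℝ) ^ x * (q : ℝ) ^ (n - 2 * x)) *
            ((n : ℝ) / (x : ℝ) ^ 2) := by
        field_simp
      rw [expand, c5]
      have hhx2 : (h : ℝ) ^ 2 ≤ (x : ℝ) ^ 2 := by
        have : (h : ℝ) ≤ (x : ℝ) := by exact_mod_cast hhx.le
        gcongr <;> try exact this
      calc ((q : ℝ) ^ d * (q : ℝ) ^ (n - d)) * (q : ℝ) ^ (n - x) * ((n : ℝ) / (x : ℝ) ^ 2)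
          ≤ (q : ℝ) ^ N * (q : ℝ) ^ (n - x) * ((n : ℝ) / (h : ℝ) ^ 2) := by
            gcongr
        _ = ((n : ℝ) / (h : ℝ) ^ 2) * (q : ℝ) ^ N * (q : ℝ) ^ (n - x) := by ring
    · have hempty : MnInt Fq ((n : ℤ) - 2 * (x : ℤ)) = ∅ := by
        rw [MnInt, if_neg]
        omega
      rw [hempty]
      have hrhs : (0:ℝ) ≤ ((n : ℝ) / (h : ℝ) ^ 2) * (q : ℝ) ^ N * (q : ℝ) ^ (n - x) := by
        positivity
      simpa using hrhs
  calc ∑ x ∈ Finset.Ioc h n,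
        ∑ χ : MulChar (RQ Fq ((Polynomial.X : Polynomial Fq) ^ d)) ℂ,
        ‖∑ P ∈ Px Fq x, (chpoly χ P) ^ 2 *
            ∑ M ∈ MnInt Fq ((n : ℤ) - 2 * (x : ℤ)), b M P * chpoly χ M‖ ^ 2
      ≤ ∑ x ∈ Finset.Ioc h n, ((n : ℝ) / (h : ℝ) ^ 2) * (q : ℝ) ^ N * (q : ℝ) ^ (n - x) :=
        Finset.sum_le_sum hper
    _ = ((n : ℝ) / (h : ℝ) ^ 2) * (q : ℝ) ^ N * ∑ x ∈ Finset.Ioc h n, (q : ℝ) ^ (n - x) := by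
        rw [← Finset.mul_sum]
    _ ≤ ((n : ℝ) / (h : ℝ) ^ 2) * (q : ℝ) ^ N * (q : ℝ) ^ (n - h) := by
        rw [mul_assoc, mul_assoc]
        refine mul_le_mul_of_nonneg_left ?_ (by positivity)
        refine mul_le_mul_of_nonneg_left ?_ (by positivity)
        have hbij : ∑ x ∈ Finset.Ioc h n, (q : ℝ) ^ (n - x)
              = ∑ j ∈ Finset.range (n - h), (q : ℝ) ^ j := by
            refine Finset.sum_bij' (fun x _ => n - x) (fun j _ => n - j) ?_ ?_ ?_ ?_ ?_
            · intro a ha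
              have := Finset.mem_Ioc.mp ha
              show n - a ∈ Finset.range (n - h)
              rw [Finset.mem_range]
              omega
            · intro j hj
              have := Finset.mem_range.mp hj
              show n - j ∈ Finset.Ioc h n
              rw [Finset.mem_Ioc]
              omega
            · intro a ha
              have := Finset.mem_Ioc.mp ha
              show n - (n - a) = a
              omega
            · intro j hj
              have := Finset.mem_range.mp hj
              show n - (n - j) = j
              omega
            · intro a _
              rfl
        rw [hbij]
        exact aux_geom_le (by exact_mod_cast hq2) _
    _ = 1 * ((n : ℝ) / (h : ℝ) ^ 2) * (q : ℝ) ^ (N + n - h) := by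
        have hp : (q : ℝ) ^ N * (q : ℝ) ^ (n - h) = (q : ℝ) ^ (N + n - h) := by
          rw [← pow_add]
          congr 1
          omega
        rw [mul_assoc, hp]
        ring
end

section
/- Extraction via Ramaré: for 1 ≤ h < n and any Dirichlet character χ, Σ_{G ∈ M_n, G not h-smooth} λ(G)χ(G) = Σ_{h < x ≤ n} Σ_{P ∈ P_x} λ(P)χ(P) Σ_{M ∈ M_{n-x}} λ(M)χ(M)/(ω_{(h,n)}(M) + 1_{gcd(P,M)=1}). -/
open Polynomial Finset Filter
open scoped Classical

lemma mem_Mn {Fq : Type} [Field Fq] [Fintype Fq] {m : ℕ} {G : Polynomial Fq} :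
    G ∈ Mn Fq m ↔ G.Monic ∧ G.natDegree = m := by
  constructor
  · intro hG
    simp only [Mn, mem_image, mem_univ, true_and] at hG
    obtain ⟨c, rfl⟩ := hG
    have hdeg : (∑ i : Fin m, C (c i) * X ^ (i : ℕ)).degree < (m : WithBot ℕ) := by
      apply lt_of_le_of_lt (degree_sum_le _ _)
      rw [Finset.sup_lt_iff (by exact_mod_cast WithBot.bot_lt_coe m)]
      intro i _
      exact lt_of_le_of_lt (degree_C_mul_X_pow_le _ _) (by exact_mod_cast i.isLt)
    have hmon : (X ^ m + ∑ i : Fin m, C (c i) * X ^ (i : ℕ)).Monic := monic_X_pow_add hdeg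
    refine ⟨hmon, ?_⟩
    have hd : (X ^ m + ∑ i : Fin m, C (c i) * X ^ (i : ℕ)).degree = (m : WithBot ℕ) := by
      rw [degree_add_eq_left_of_degree_lt (by rwa [degree_X_pow]), degree_X_pow]
    exact natDegree_eq_of_degree_eq_some hd
  · rintro ⟨hmon, rfl⟩
    simp only [Mn, mem_image, mem_univ, true_and]
    refine ⟨fun i => G.coeff i, ?_⟩
    ext k
    rw [coeff_add, coeff_X_pow, finset_sum_coeff]
    simp only [coeff_C_mul, coeff_X_pow, mul_ite, mul_one, mul_zero]
    rw [Fin.sum_univ_eq_sum_range (fun i => if k = (i : ℕ) then G.coeff i else 0)]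
    rw [Finset.sum_ite_eq (Finset.range G.natDegree) k (fun i => G.coeff i)]
    rcases lt_trichotomy k G.natDegree with hk | hk | hk
    · simp [Finset.mem_range.mpr hk, hk.ne]
    · subst hk
      simp [hmon.coeff_natDegree]
    · rw [if_neg (by omega), if_neg (by simp; omega), coeff_eq_zero_of_natDegree_lt hk]
      ring

lemma mem_Px {Fq : Type} [Field Fq] [Fintype Fq] {x : ℕ} {P : Polynomial Fq} :
    P ∈ Px Fq x ↔ P.Monic ∧ Irreducible P ∧ P.natDegree = x := by
  simp only [Px, mem_filter, mem_Mn]; tauto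

lemma liouville_mul {Fq : Type} [Field Fq] [Fintype Fq] {P M : Polynomial Fq}
    (hP : P ≠ 0) (hM : M ≠ 0) : liouville (P * M) = liouville P * liouville M := by
  have hc : ∀ a : Polynomial Fq, Multiset.card (UniqueFactorizationMonoid.factors a)
      = Multiset.card (UniqueFactorizationMonoid.normalizedFactors a) := fun a => by
    rw [UniqueFactorizationMonoid.normalizedFactors, Multiset.card_map]
  unfold liouville
  rw [← pow_add, hc, hc, hc, UniqueFactorizationMonoid.normalizedFactors_mul hP hM,
    Multiset.card_add]

lemma chpoly_mul {Fq : Type} [Field Fq] [Fintype Fq] {Q : Polynomial Fq}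
    (χ : MulChar (RQ Fq Q) ℂ) (P M : Polynomial Fq) :
    chpoly χ (P * M) = chpoly χ P * chpoly χ M := by
  simp [chpoly, map_mul]

lemma omegaIoc_mul {Fq : Type} [Field Fq] [Fintype Fq] {h n : ℕ} {P M : Polynomial Fq}
    (hPm : P.Monic) (hPi : Irreducible P) (hx1 : h < P.natDegree) (hx2 : P.natDegree ≤ n)
    (hM : M ≠ 0) :
    omegaIoc h n (P * M) = omegaIoc h n M + (if ¬ P ∣ M then 1 else 0) := by
  classical
  unfold omegaIoc
  have hPmem : P ∈ (Finset.Ioc h n).biUnion (Px Fq) :=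
    Finset.mem_biUnion.mpr ⟨P.natDegree, Finset.mem_Ioc.mpr ⟨hx1, hx2⟩,
      mem_Px.mpr ⟨hPm, hPi, rfl⟩⟩
  have hset : (((Finset.Ioc h n).biUnion (Px Fq)).filter (· ∣ P * M)) =
      insert P (((Finset.Ioc h n).biUnion (Px Fq)).filter (· ∣ M)) := by
    ext R
    simp only [Finset.mem_filter, Finset.mem_insert]
    constructor
    · rintro ⟨hRmem, hRdvd⟩
      obtain ⟨x, hx, hRx⟩ := Finset.mem_biUnion.mp hRmem
      obtain ⟨hRmon, hRirr, -⟩ := mem_Px.mp hRx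
      rcases hRirr.prime.dvd_mul.mp hRdvd with hd | hd
      · exact Or.inl (Polynomial.eq_of_monic_of_associated hRmon hPm
          (hRirr.associated_of_dvd hPi hd))
      · exact Or.inr ⟨hRmem, hd⟩
    · rintro (rfl | ⟨hm, hd⟩)
      · exact ⟨hPmem, Dvd.intro M rfl⟩
      · exact ⟨hm, hd.mul_left P⟩
  rw [hset]
  by_cases hPM : P ∣ M
  · rw [if_neg (not_not.mpr hPM), add_zero]
    exact Finset.card_insert_of_mem (Finset.mem_filter.mpr ⟨hPmem, hPM⟩)
  · rw [if_pos hPM]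
    exact Finset.card_insert_of_notMem (fun hc => hPM (Finset.mem_filter.mp hc).2)

lemma omegaIoc_pos {Fq : Type} [Field Fq] [Fintype Fq] {h n : ℕ} {G : Polynomial Fq}
    (hG : G ∈ Mn Fq n) (hsm : ¬ IsSmooth h G) : 0 < omegaIoc h n G := by
  classical
  obtain ⟨hGmon, hGdeg⟩ := mem_Mn.mp hG
  simp only [IsSmooth, not_forall] at hsm
  obtain ⟨P₀, hP₀irr, hP₀dvd, hP₀deg⟩ := hsm
  have hP₀0 : P₀ ≠ 0 := hP₀irr.ne_zero
  have hlc : P₀.leadingCoeff ≠ 0 := leadingCoeff_ne_zero.mpr hP₀0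
  set P := P₀ * C P₀.leadingCoeff⁻¹ with hPdef
  have hassoc : Associated P₀ P :=
    associated_mul_unit_right P₀ _ (isUnit_C.mpr (isUnit_iff_ne_zero.mpr (inv_ne_zero hlc)))
  have hPmon : P.Monic := monic_mul_leadingCoeff_inv hP₀0
  have hPirr : Irreducible P := hassoc.irreducible hP₀irr
  have hPdvd : P ∣ G := hassoc.symm.dvd.trans hP₀dvd
  have hPdeg : P.natDegree = P₀.natDegree := by
    rw [hPdef, natDegree_mul hP₀0 (by simp [inv_ne_zero hlc]), natDegree_C, add_zero]
  have hG0 : G ≠ 0 := hGmon.ne_zero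
  refine Finset.card_pos.mpr ⟨P, Finset.mem_filter.mpr ⟨Finset.mem_biUnion.mpr
    ⟨P.natDegree, Finset.mem_Ioc.mpr ⟨by omega, ?_⟩, mem_Px.mpr ⟨hPmon, hPirr, rfl⟩⟩, hPdvd⟩⟩
  calc P.natDegree ≤ G.natDegree := natDegree_le_of_dvd hPdvd hG0
    _ = n := hGdeg

theorem ramare_extraction (Fq : Type) [Field Fq] [Fintype Fq]
    (h n : ℕ) (hh : 1 ≤ h) (hn : h < n)
    (Q : Polynomial Fq) (χ : MulChar (RQ Fq Q) ℂ) :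
    ∑ G ∈ (Mn Fq n).filter (fun G => ¬ IsSmooth h G), (liouville G : ℂ) * chpoly χ G =
      ∑ x ∈ Finset.Ioc h n, ∑ P ∈ Px Fq x,
        (liouville P : ℂ) * chpoly χ P *
          ∑ M ∈ Mn Fq (n - x),
            (liouville M : ℂ) * chpoly χ M /
              ((omegaIoc h n M : ℂ) + if ¬ P ∣ M then 1 else 0) := by
  classical
  set S : Finset ((_ : ℕ) × Polynomial Fq × Polynomial Fq) :=
    (Finset.Ioc h n).sigma (fun x => Px Fq x ×ˢ Mn Fq (n - x)) with hSdef
  set F : ((_ : ℕ) × Polynomial Fq × Polynomial Fq) → ℂ := fun s =>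
    (liouville s.2.1 : ℂ) * chpoly χ s.2.1 *
      ((liouville s.2.2 : ℂ) * chpoly χ s.2.2 /
        ((omegaIoc h n s.2.2 : ℂ) + if ¬ s.2.1 ∣ s.2.2 then 1 else 0)) with hFdef
  have hRHS : ∑ s ∈ S, F s =
      ∑ x ∈ Finset.Ioc h n, ∑ P ∈ Px Fq x,
        (liouville P : ℂ) * chpoly χ P *
          ∑ M ∈ Mn Fq (n - x),
            (liouville M : ℂ) * chpoly χ M /
              ((omegaIoc h n M : ℂ) + if ¬ P ∣ M then 1 else 0) := by
    rw [hSdef, Finset.sum_sigma]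
    refine Finset.sum_congr rfl fun x _ => ?_
    rw [Finset.sum_product]
    exact Finset.sum_congr rfl fun P _ => by rw [Finset.mul_sum]
  rw [← hRHS]
  have hmaps : ∀ s ∈ S, s.2.1 * s.2.2 ∈ (Mn Fq n).filter (fun G => ¬ IsSmooth h G) := by
    rintro ⟨x, P, M⟩ hs
    simp only [hSdef, Finset.mem_sigma, Finset.mem_product] at hs
    obtain ⟨hx, hP, hM⟩ := hs
    obtain ⟨hx1, hx2⟩ := Finset.mem_Ioc.mp hx
    obtain ⟨hPmon, hPirr, hPdeg⟩ := mem_Px.mp hP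
    obtain ⟨hMmon, hMdeg⟩ := mem_Mn.mp hM
    refine Finset.mem_filter.mpr ⟨mem_Mn.mpr ⟨hPmon.mul hMmon, ?_⟩, fun hsm => ?_⟩
    · rw [natDegree_mul hPirr.ne_zero hMmon.ne_zero, hPdeg, hMdeg]; omega
    · have := hsm P hPirr (Dvd.intro M rfl)
      omega
  rw [← Finset.sum_fiberwise_of_maps_to hmaps F]
  refine Finset.sum_congr rfl fun G hG => ?_
  obtain ⟨hGMn, hGsm⟩ := Finset.mem_filter.mp hG
  obtain ⟨hGmon, hGdeg⟩ := mem_Mn.mp hGMn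
  have hG0 : G ≠ 0 := hGmon.ne_zero
  have hω : 0 < omegaIoc h n G := omegaIoc_pos hGMn hGsm
  have hωC : (omegaIoc h n G : ℂ) ≠ 0 := Nat.cast_ne_zero.mpr hω.ne'
  have hterm : ∀ s ∈ S.filter (fun s => s.2.1 * s.2.2 = G),
      F s = (liouville G : ℂ) * chpoly χ G / (omegaIoc h n G : ℂ) := by
    rintro ⟨x, P, M⟩ hs
    simp only [hSdef, Finset.mem_filter, Finset.mem_sigma, Finset.mem_product] at hs
    obtain ⟨⟨hx, hP, hM⟩, hprod⟩ := hs
    obtain ⟨hx1, hx2⟩ := Finset.mem_Ioc.mp hx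
    obtain ⟨hPmon, hPirr, hPdeg⟩ := mem_Px.mp hP
    obtain ⟨hMmon, hMdeg⟩ := mem_Mn.mp hM
    have hP0 : P ≠ 0 := hPirr.ne_zero
    have hM0 : M ≠ 0 := hMmon.ne_zero
    have homega : omegaIoc h n G = omegaIoc h n M + (if ¬ P ∣ M then 1 else 0) := by
      rw [← hprod]
      exact omegaIoc_mul hPmon hPirr (by omega) (by omega) hM0
    have hw : ((omegaIoc h n G : ℕ) : ℂ) =
        (omegaIoc h n M : ℂ) + (if ¬ P ∣ M then 1 else 0) := by
      rw [homega, Nat.cast_add]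
      congr 1
      split <;> simp
    show (liouville P : ℂ) * chpoly χ P * ((liouville M : ℂ) * chpoly χ M /
        ((omegaIoc h n M : ℂ) + if ¬ P ∣ M then 1 else 0)) = _
    rw [hw, ← hprod, liouville_mul hP0 hM0, chpoly_mul]
    push_cast
    ring
  rw [Finset.sum_congr rfl hterm, Finset.sum_const]
  have hcard : (S.filter (fun s => s.2.1 * s.2.2 = G)).card = omegaIoc h n G := by
    unfold omegaIoc
    refine Finset.card_bij (fun s _ => s.2.1) ?_ ?_ ?_
    · rintro ⟨x, P, M⟩ hs
      simp only [hSdef, Finset.mem_filter, Finset.mem_sigma, Finset.mem_product] at hs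
      obtain ⟨⟨hx, hP, hM⟩, hprod⟩ := hs
      obtain ⟨hPmon, hPirr, hPdeg⟩ := mem_Px.mp hP
      exact Finset.mem_filter.mpr ⟨Finset.mem_biUnion.mpr ⟨x, hx, hP⟩,
        ⟨M, hprod.symm⟩⟩
    · rintro ⟨x1, P1, M1⟩ h1 ⟨x2, P2, M2⟩ h2 heq
      simp only [hSdef, Finset.mem_filter, Finset.mem_sigma, Finset.mem_product] at h1 h2
      obtain ⟨⟨hx1, hP1, hM1⟩, hprod1⟩ := h1
      obtain ⟨⟨hx2, hP2, hM2⟩, hprod2⟩ := h2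
      simp only at heq
      obtain ⟨hP1mon, hP1irr, hP1deg⟩ := mem_Px.mp hP1
      obtain ⟨hP2mon, hP2irr, hP2deg⟩ := mem_Px.mp hP2
      have hxx : x1 = x2 := by rw [← hP1deg, ← hP2deg, heq]
      subst hxx; subst heq
      have hMM : M1 = M2 := by
        apply mul_left_cancel₀ hP1irr.ne_zero
        rw [hprod1, hprod2]
      rw [hMM]
    · intro R hR
      obtain ⟨hRmem, hRdvd⟩ := Finset.mem_filter.mp hR
      obtain ⟨x, hx, hRx⟩ := Finset.mem_biUnion.mp hRmem
      obtain ⟨hRmon, hRirr, hRdeg⟩ := mem_Px.mp hRx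
      obtain ⟨M, hGM⟩ := hRdvd
      have hR0 : R ≠ 0 := hRirr.ne_zero
      have hMmon : M.Monic := hRmon.of_mul_monic_left (hGM ▸ hGmon)
      have hM0 : M ≠ 0 := hMmon.ne_zero
      have hMdeg : M.natDegree = n - x := by
        have := natDegree_mul hR0 hM0
        rw [← hGM, hGdeg, hRdeg] at this
        omega
      refine ⟨⟨x, R, M⟩, ?_, rfl⟩
      simp only [hSdef, Finset.mem_filter, Finset.mem_sigma, Finset.mem_product]
      exact ⟨⟨hx, hRx, mem_Mn.mpr ⟨hMmon, hMdeg⟩⟩, hGM.symm⟩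
  rw [hcard, nsmul_eq_mul]
  field_simp
end
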